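/- Let char k = 5 and G = Sp_4 over k, with fundamental weights ω_1, ω_2. In the irreducible G-module L(ω_1+ω_2) with weight basis {u_λ} as specified, the subspace W of Sym²(L(ω_1+ω_2)) of weight 2ω_1 = 2ε_1 annihilated by the root operators x_{α_1} and x_{α_2} is one-dimensional: writing f = α·u_{ε_1+2ε_2}u_{ε_1−2ε_2} + β·u_{2ε_1+ε_2}u_{−ε_2} + γ·u_{2ε_1−ε_2}u_{ε_2} + δ·u_{ε_1}², the conditions x_{α_1}·f = 0 and x_{α_2}·f = 0 are equivalent to the linear system α + 2β = 0, γ − 2δ = 0, α + δ = 0, β + γ = 0, whose solution space is one-dimensional. -/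

import Mathlib

/-!
STATEMENT 17: `char k = 5`, `G = Sp₄`, `L(ω₁+ω₂)` the 12-dimensional irreducible
module with weight basis `u_λ` (weights `±2ε₁±ε₂, ±ε₁±2ε₂, ±ε₁, ±ε₂`).  In
`Sym²(L(ω₁+ω₂))`, the subspace of weight `2ε₁` annihilated by the root operators
`x_{α₁}, x_{α₂}` is one-dimensional: for
`f = α·u_{ε₁+2ε₂}u_{ε₁-2ε₂} + β·u_{2ε₁+ε₂}u_{-ε₂} + γ·u_{2ε₁-ε₂}u_{ε₂} + δ·u_{ε₁}²`,
the conditions `x_{α₁}·f = 0` and `x_{α₂}·f = 0` are equivalent to the linear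
system `α + 2β = 0`, `γ - 2δ = 0`, `α + δ = 0`, `β + γ = 0`, whose solution space
is one-dimensional.

Basis indexing of `L(ω₁+ω₂)`:
0: 2ε₁+ε₂, 1: 2ε₁-ε₂, 2: ε₁+2ε₂, 3: ε₁-2ε₂, 4: -2ε₁+ε₂, 5: -2ε₁-ε₂,
6: -ε₁-2ε₂, 7: -ε₁+2ε₂, 8: ε₁, 9: ε₂, 10: -ε₂, 11: -ε₁.
The matrices `A₁, A₂` of `x_{α₁}, x_{α₂}` are read off the root-group formulas;
`Sym²` is modelled by symmetric tensors (symmetric `12 × 12` matrices, with the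
monomial `u_λ u_μ ↦ E_{λμ} + E_{μλ}`), with `x·z = A z + z Aᵀ`.
-/

open Matrix

namespace Stmt17

variable (k : Type*) [Field k]

def E (i j : Fin 12) : Matrix (Fin 12) (Fin 12) k := Matrix.single i j 1

/-- The operator `x_{α₁}` on `L(ω₁+ω₂)`. -/
def A1 : Matrix (Fin 12) (Fin 12) k :=
  -(E k 6 5) - E k 11 4 - E k 10 11 + (2 : k) • E k 3 10 + E k 9 7 +
    (2 : k) • E k 8 9 - (2 : k) • E k 1 8 + E k 0 2

/-- The operator `x_{α₂}` on `L(ω₁+ω₂)`. -/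
def A2 : Matrix (Fin 12) (Fin 12) k :=
  E k 4 5 + (2 : k) • E k 11 6 + E k 7 11 + E k 9 10 + (2 : k) • E k 8 3 +
    E k 2 8 + E k 0 1

/-- The symmetrized monomial `u_i u_j` in `Sym²(L(ω₁+ω₂))`. -/
def symm (i j : Fin 12) : Matrix (Fin 12) (Fin 12) k := E k i j + E k j i

/-- The general weight-`2ε₁` vector `f` in `Sym²(L(ω₁+ω₂))`. -/
def f (α β γ δ : k) : Matrix (Fin 12) (Fin 12) k :=
  α • symm k 2 3 + β • symm k 0 10 + γ • symm k 1 9 + δ • symm k 8 8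

/-- The Leibniz action of an operator `A` on symmetric tensors. -/
def rho (A z : Matrix (Fin 12) (Fin 12) k) : Matrix (Fin 12) (Fin 12) k :=
  A * z + z * Aᵀ

/-- The coefficient matrix of the linear system
`α + 2β = 0, γ - 2δ = 0, α + δ = 0, β + γ = 0`. -/
def sys : Matrix (Fin 4) (Fin 4) k := !![1, 2, 0, 0; 0, 0, 1, -2; 1, 0, 0, 1; 0, 1, 1, 0]

end Stmt17

section Aux
open Stmt17
variable (k : Type*) [Field k]

lemma Etr (i j : Fin 12) : (E k i j)ᵀ = E k j i := by
  ext a b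
  simp [E, Matrix.single, and_comm]

lemma rho1_eq (α β γ δ : k) : rho k (A1 k) (f k α β γ δ) =
    (α + 2 * β) • Stmt17.symm k 0 3 + (2 * (γ - 2 * δ)) • Stmt17.symm k 1 8 := by
  simp only [rho, A1, f, Stmt17.symm, Matrix.transpose_add, Matrix.transpose_sub,
    Matrix.transpose_neg, Matrix.transpose_smul, Etr]
  simp only [E, add_mul, mul_add, sub_mul, mul_sub, neg_mul, mul_neg, smul_mul_assoc,
    mul_smul_comm, smul_add, smul_smul,
    Matrix.single_mul_single_same, Matrix.single_mul_single_of_ne, smul_zero,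
    neg_zero, add_zero, zero_add, sub_zero, zero_sub, mul_one, ne_eq, Fin.reduceEq,
    not_false_eq_true]
  module

lemma rho2_eq (α β γ δ : k) : rho k (A2 k) (f k α β γ δ) =
    (β + γ) • Stmt17.symm k 0 9 + (2 * (α + δ)) • Stmt17.symm k 2 8 := by
  simp only [rho, A2, f, Stmt17.symm, Matrix.transpose_add, Matrix.transpose_sub,
    Matrix.transpose_neg, Matrix.transpose_smul, Etr]
  simp only [E, add_mul, mul_add, sub_mul, mul_sub, neg_mul, mul_neg, smul_mul_assoc,
    mul_smul_comm, smul_add, smul_smul,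
    Matrix.single_mul_single_same, Matrix.single_mul_single_of_ne, smul_zero,
    neg_zero, add_zero, zero_add, sub_zero, zero_sub, mul_one, ne_eq, Fin.reduceEq,
    not_false_eq_true]
  module

end Aux

open Stmt17 in
theorem stmt17 (k : Type*) [Field k] [CharP k 5] :
    (∀ α β γ δ : k,
      (rho k (A1 k) (f k α β γ δ) = 0 ∧ rho k (A2 k) (f k α β γ δ) = 0) ↔
        (α + 2 * β = 0 ∧ γ - 2 * δ = 0 ∧ α + δ = 0 ∧ β + γ = 0)) ∧
    Module.finrank k (LinearMap.ker (Matrix.mulVecLin (sys k))) = 1 := by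
  have h5 : (5 : k) = 0 := by exact_mod_cast CharP.cast_eq_zero k 5
  have h2 : (2 : k) ≠ 0 := by
    intro h
    have : (5 : ℕ) ∣ 2 := (CharP.cast_eq_zero_iff k 5 2).mp (by exact_mod_cast h)
    norm_num at this
  constructor
  · intro α β γ δ
    constructor
    · rintro ⟨h1, h2'⟩
      rw [rho1_eq] at h1
      rw [rho2_eq] at h2'
      have e1 : α + 2 * β = 0 := by
        have h := Matrix.ext_iff.mpr h1 0 3
        simp only [Stmt17.symm, E, Matrix.add_apply, Matrix.smul_apply, Matrix.zero_apply,
          Matrix.single_apply_same, smul_eq_mul, mul_one,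
          Matrix.single_apply_of_ne, mul_zero, add_zero, zero_add,
          Fin.reduceEq, and_false, false_and, not_false_eq_true, and_true, true_and] at h
        exact h
      have e2 : 2 * (γ - 2 * δ) = 0 := by
        have h := Matrix.ext_iff.mpr h1 1 8
        simp only [Stmt17.symm, E, Matrix.add_apply, Matrix.smul_apply, Matrix.zero_apply,
          Matrix.single_apply_same, smul_eq_mul, mul_one,
          Matrix.single_apply_of_ne, mul_zero, add_zero, zero_add,
          Fin.reduceEq, and_false, false_and, not_false_eq_true, and_true, true_and] at h
        exact h
      have e3 : β + γ = 0 := by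
        have h := Matrix.ext_iff.mpr h2' 0 9
        simp only [Stmt17.symm, E, Matrix.add_apply, Matrix.smul_apply, Matrix.zero_apply,
          Matrix.single_apply_same, smul_eq_mul, mul_one,
          Matrix.single_apply_of_ne, mul_zero, add_zero, zero_add,
          Fin.reduceEq, and_false, false_and, not_false_eq_true, and_true, true_and] at h
        exact h
      have e4 : 2 * (α + δ) = 0 := by
        have h := Matrix.ext_iff.mpr h2' 2 8
        simp only [Stmt17.symm, E, Matrix.add_apply, Matrix.smul_apply, Matrix.zero_apply,
          Matrix.single_apply_same, smul_eq_mul, mul_one,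
          Matrix.single_apply_of_ne, mul_zero, add_zero, zero_add,
          Fin.reduceEq, and_false, false_and, not_false_eq_true, and_true, true_and] at h
        exact h
      refine ⟨e1, ?_, ?_, e3⟩
      · rcases mul_eq_zero.mp e2 with h | h
        · exact absurd h h2
        · exact h
      · rcases mul_eq_zero.mp e4 with h | h
        · exact absurd h h2
        · exact h
    · rintro ⟨e1, e2, e3, e4⟩
      constructor
      · rw [rho1_eq, e1, e2]
        simp
      · rw [rho2_eq, e4, e3]
        simp
  · have hv : (![1, 2, 3, -1] : Fin 4 → k) ≠ 0 := by
      intro h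
      have := congrFun h 0
      simp at this
    have hker : LinearMap.ker (Matrix.mulVecLin (sys k)) =
        Submodule.span k {(![1, 2, 3, -1] : Fin 4 → k)} := by
      ext x
      rw [LinearMap.mem_ker, Submodule.mem_span_singleton]
      constructor
      · intro hx
        have e1 : x 0 + 2 * x 1 = 0 := by
          have h := congrFun hx 0
          simpa [sys, Matrix.mulVecLin, Matrix.mulVec, dotProduct, Fin.sum_univ_four] using h
        have e3 : x 0 + x 3 = 0 := by
          have h := congrFun hx 2
          simpa [sys, Matrix.mulVecLin, Matrix.mulVec, dotProduct, Fin.sum_univ_four] using h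
        have e4 : x 1 + x 2 = 0 := by
          have h := congrFun hx 3
          simpa [sys, Matrix.mulVecLin, Matrix.mulVec, dotProduct, Fin.sum_univ_four] using h
        refine ⟨x 0, funext fun i => ?_⟩
        fin_cases i
        · show (x 0) * 1 = x 0
          ring
        · show (x 0) * 2 = x 1
          linear_combination 2 * e1 - x 1 * h5
        · show (x 0) * 3 = x 2
          linear_combination 3 * e1 - e4 - x 1 * h5
        · show (x 0) * (-1) = x 3
          linear_combination -e3
      · rintro ⟨c, rfl⟩
        funext i
        fin_cases i <;>
          simp [sys, Matrix.mulVecLin_apply, Matrix.mulVec, dotProduct, Fin.sum_univ_four] <;>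
          linear_combination c * h5
    rw [hker]
    exact finrank_span_singleton hv
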